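/- arXiv:2307.01661 — 2 statements merged into one kernel-verified Lean document; each statement's English description precedes it below -/
import Mathlib

section
/- Let G be a finite non-cyclic group. Then the proper enhanced power graph P_E**(G) is the complement of a line graph of some graph if and only if G is isomorphic to an elementary abelian 2-group Z_2 × ⋯ × Z_2 or to the quaternion group Q_8. -/
open Subgroup

/-- A graph is a line graph if it is isomorphic to the line graph of some graph. -/
def IsLineGraph {V : Type} (Γ : SimpleGraph V) : Prop :=
  ∃ (W : Type) (H : SimpleGraph W), Nonempty (Γ ≃g H.lineGraph)

/-- The power graph of a group: distinct `x`, `y` are adjacent iff one is a power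
of the other. -/
def powerGraph (G : Type) [Group G] : SimpleGraph G where
  Adj x y := x ≠ y ∧ (x ∈ zpowers y ∨ y ∈ zpowers x)
  symm := ⟨by rintro x y ⟨hne, h⟩; exact ⟨hne.symm, h.symm⟩⟩
  loopless := ⟨by rintro x ⟨hne, _⟩; exact hne rfl⟩

/-- The enhanced power graph of a group: distinct `x`, `y` are adjacent iff both are
powers of a common element. -/
def enhancedPowerGraph (G : Type) [Group G] : SimpleGraph G where
  Adj x y := x ≠ y ∧ ∃ z : G, x ∈ zpowers z ∧ y ∈ zpowers z
  symm := ⟨by rintro x y ⟨hne, z, hx, hy⟩; exact ⟨hne.symm, z, hy, hx⟩⟩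
  loopless := ⟨by rintro x ⟨hne, _⟩; exact hne rfl⟩

/-- A vertex is dominating if it is adjacent to all other vertices. -/
def IsDominatingVertex {V : Type} (Γ : SimpleGraph V) (v : V) : Prop :=
  ∀ w : V, w ≠ v → Γ.Adj v w

/-- The graph induced on the non-dominating vertices. -/
def properGraph {V : Type} (Γ : SimpleGraph V) :
    SimpleGraph {v : V | ¬ IsDominatingVertex Γ v} :=
  Γ.induce {v : V | ¬ IsDominatingVertex Γ v}

/-- The proper power graph `P**(G)`. -/
abbrev properPowerGraph (G : Type) [Group G] := properGraph (powerGraph G)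

/-- The proper enhanced power graph `P_E**(G)`. -/
abbrev properEnhancedPowerGraph (G : Type) [Group G] := properGraph (enhancedPowerGraph G)

/-- A maximal cyclic subgroup: cyclic and not properly contained in a cyclic subgroup. -/
def IsMaxCyclic {G : Type} [Group G] (M : Subgroup G) : Prop :=
  IsCyclic M ∧ ∀ N : Subgroup G, IsCyclic N → M ≤ N → N = M

/-- `T(G)`: the intersection of all maximal cyclic subgroups of `G`. -/
def cyclicCore (G : Type) [Group G] : Subgroup G :=
  ⨅ (M : Subgroup G) (_ : IsMaxCyclic M), M

/-- `G` is an elementary abelian 2-group `Z₂ × ⋯ × Z₂`. -/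
def IsElemAbelianTwo (G : Type) [Group G] : Prop :=
  ∃ k : ℕ, 1 ≤ k ∧ Nonempty (G ≃* (Fin k → Multiplicative (ZMod 2)))

section MaxCyclic
set_option linter.unusedSectionVars false

variable {G : Type} [Group G] [Fintype G]

lemma isCyclic_zpowers' (g : G) : IsCyclic (zpowers g) := by
  refine ⟨⟨⟨g, mem_zpowers g⟩, ?_⟩⟩
  rintro ⟨x, hx⟩
  obtain ⟨k, hk⟩ := hx
  exact ⟨k, Subtype.ext (by simpa using hk)⟩

lemma exists_maxCyclic_ge (H : Subgroup G) (hH : IsCyclic H) :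
    ∃ M : Subgroup G, IsMaxCyclic M ∧ H ≤ M := by
  have hfin : ({N : Subgroup G | IsCyclic N ∧ H ≤ N}).Finite := by
    have : Finite (Subgroup G) :=
      Finite.of_injective (fun K : Subgroup G => (K : Set G)) SetLike.coe_injective
    exact Set.toFinite _
  obtain ⟨M, hM, hmax⟩ := Set.Finite.exists_maximalFor id _ hfin ⟨H, hH, le_rfl⟩
  exact ⟨M, ⟨hM.1, fun N hN hle => le_antisymm (hmax (j := N) ⟨hN, hM.2.trans hle⟩ hle) hle⟩, hM.2⟩

lemma exists_maxCyclic_mem (x : G) : ∃ M : Subgroup G, IsMaxCyclic M ∧ x ∈ M := by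
  obtain ⟨M, hM, hle⟩ := exists_maxCyclic_ge (zpowers x) (isCyclic_zpowers' x)
  exact ⟨M, hM, hle (mem_zpowers x)⟩

lemma exists_gen {M : Subgroup G} (h : IsCyclic M) : ∃ g : G, zpowers g = M := by
  obtain ⟨⟨g, hgM⟩, hgen⟩ := h
  refine ⟨g, le_antisymm (zpowers_le.mpr hgM) ?_⟩
  intro y hy
  obtain ⟨k, hk⟩ := hgen ⟨y, hy⟩
  exact ⟨k, by simpa using congrArg Subtype.val hk⟩

/-- a maximal cyclic subgroup containing a generator of `M` equals `M`. -/
lemma eq_of_gen_mem {g : G} {M N : Subgroup G} (hM : IsMaxCyclic M) (hgM : zpowers g = M)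
    (hN : IsMaxCyclic N) (hgN : g ∈ N) : N = M := by
  have h1 : M ≤ N := hgM ▸ zpowers_le.mpr hgN
  exact hM.2 N hN.1 h1

lemma adj_iff_maxCyclic {x y : G} :
    (enhancedPowerGraph G).Adj x y ↔ x ≠ y ∧ ∃ M : Subgroup G, IsMaxCyclic M ∧ x ∈ M ∧ y ∈ M := by
  constructor
  · rintro ⟨hne, z, hx, hy⟩
    obtain ⟨M, hM, hle⟩ := exists_maxCyclic_ge (zpowers z) (isCyclic_zpowers' z)
    exact ⟨hne, M, hM, hle hx, hle hy⟩
  · rintro ⟨hne, M, hM, hx, hy⟩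
    obtain ⟨g, hg⟩ := exists_gen hM.1
    exact ⟨hne, g, hg.symm ▸ hx, hg.symm ▸ hy⟩

lemma isDominating_iff {v : G} :
    IsDominatingVertex (enhancedPowerGraph G) v ↔ ∀ M : Subgroup G, IsMaxCyclic M → v ∈ M := by
  constructor
  · intro h M hM
    obtain ⟨g, hg⟩ := exists_gen hM.1
    by_cases hvg : v = g
    · exact hvg ▸ (hg ▸ mem_zpowers g)
    · have hadj := h g (Ne.symm hvg)
      obtain ⟨-, N, hN, hvN, hgN⟩ := adj_iff_maxCyclic.mp hadj
      exact (eq_of_gen_mem hM hg hN hgN) ▸ hvN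
  · intro h w hw
    obtain ⟨M, hM, hwM⟩ := exists_maxCyclic_mem w
    obtain ⟨g, hg⟩ := exists_gen hM.1
    exact ⟨Ne.symm hw, g, hg.symm ▸ h M hM, hg.symm ▸ hwM⟩

lemma one_isDominating : IsDominatingVertex (enhancedPowerGraph G) (1 : G) :=
  fun w hw => ⟨Ne.symm hw, w, one_mem _, mem_zpowers w⟩

lemma exists_maxCyclic_ne (hnc : ¬ IsCyclic G) {M : Subgroup G} (_hM : IsMaxCyclic M) :
    ∃ N : Subgroup G, IsMaxCyclic N ∧ N ≠ M := by
  by_contra h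
  push_neg at h
  apply hnc
  obtain ⟨g, hg⟩ := exists_gen _hM.1
  refine ⟨⟨g, fun x => ?_⟩⟩
  obtain ⟨N, hN, hxN⟩ := exists_maxCyclic_mem x
  have hx : x ∈ M := (h N hN) ▸ hxN
  rw [← hg] at hx
  exact hx

lemma gen_not_dominating (hnc : ¬ IsCyclic G) {M : Subgroup G} {g : G} (hM : IsMaxCyclic M)
    (hg : zpowers g = M) : ¬ IsDominatingVertex (enhancedPowerGraph G) g := by
  intro h
  obtain ⟨N, hN, hne⟩ := exists_maxCyclic_ne hnc hM
  exact hne (eq_of_gen_mem hM hg hN (isDominating_iff.mp h N hN))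

lemma gen_not_mem {M N : Subgroup G} {g : G} (hM : IsMaxCyclic M) (hg : zpowers g = M)
    (hN : IsMaxCyclic N) (hne : N ≠ M) : g ∉ N :=
  fun h => hne (eq_of_gen_mem hM hg hN h)

lemma gen_not_adj {M N : Subgroup G} {gM gN : G} (hM : IsMaxCyclic M) (hN : IsMaxCyclic N)
    (hgM : zpowers gM = M) (hgN : zpowers gN = N) (hMN : M ≠ N) :
    ¬ (enhancedPowerGraph G).Adj gM gN ∧ gM ≠ gN := by
  constructor
  · intro h
    obtain ⟨-, K, hK, h1, h2⟩ := adj_iff_maxCyclic.mp h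
    exact hMN ((eq_of_gen_mem hM hgM hK h1).symm.trans (eq_of_gen_mem hN hgN hK h2))
  · rintro rfl
    exact hMN (hgM ▸ hgN ▸ rfl)

lemma not_union_two {M N : Subgroup G} (h : ∀ x : G, x ∈ M ∨ x ∈ N) : M ≤ N ∨ N ≤ M := by
  by_contra hc
  push_neg at hc
  obtain ⟨⟨a, haM, haN⟩, ⟨b, hbN, hbM⟩⟩ :
      (∃ a, a ∈ M ∧ a ∉ N) ∧ (∃ b, b ∈ N ∧ b ∉ M) := by
    constructor
    · exact SetLike.not_le_iff_exists.mp hc.1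
    · exact SetLike.not_le_iff_exists.mp hc.2
  rcases h (a * b) with hab | hab
  · exact hbM ((mul_mem_cancel_left haM).mp hab)
  · exact haN ((mul_mem_cancel_right hbN).mp hab)

lemma zpowers_sq_one {h : G} (hh : h * h = 1) : ∀ y ∈ zpowers h, y = 1 ∨ y = h := by
  intro y hy
  obtain ⟨n, rfl⟩ := mem_powers_iff_mem_zpowers.mpr hy
  have key : h ^ n = h ^ (n % 2) := by
    conv_lhs => rw [← Nat.div_add_mod n 2]
    rw [pow_add, pow_mul, pow_two, hh, one_pow, one_mul]
  have h2 : n % 2 < 2 := Nat.mod_lt _ (by norm_num)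
  interval_cases hn : n % 2
  · left; show h ^ n = 1; rw [key, pow_zero]
  · right; show h ^ n = h; rw [key, pow_one]

lemma sq_one_of_mem {g : G} (hg : g * g = 1) {y : G} (hy : y ∈ zpowers g) : y * y = 1 := by
  rcases zpowers_sq_one hg y hy with rfl | rfl
  · simp
  · exact hg

end MaxCyclic
section LineGraphForbidden
open SimpleGraph

/-- helper for the 4-pairwise-intersecting lemma. -/
private lemma sym2_helper {W : Type} {u v : W} {B C D : Sym2 W} (huv : u ≠ v)
    (hvB : v ∈ B) (huB : u ∉ B) (huC : u ∈ C)
    (hD : u ∈ D ∨ v ∈ D)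
    (hBC : ∃ x, x ∈ B ∧ x ∈ C) (hBD : ∃ x, x ∈ B ∧ x ∈ D) (hCD : ∃ x, x ∈ C ∧ x ∈ D)
    (hCA : C ≠ s(u, v)) (hDA : D ≠ s(u, v)) (hBD' : B ≠ D) (hCD' : C ≠ D) : False := by
  have hvC : v ∉ C := fun hvC => hCA ((Sym2.mem_and_mem_iff huv).mp ⟨huC, hvC⟩)
  obtain ⟨x, hxB, hxC⟩ := hBC
  have hxu : x ≠ u := fun h => huB (h ▸ hxB)
  have hxv : x ≠ v := fun h => hvC (h ▸ hxC)
  have hB : B = s(v, x) := (Sym2.mem_and_mem_iff (Ne.symm hxv)).mp ⟨hvB, hxB⟩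
  have hC : C = s(u, x) := (Sym2.mem_and_mem_iff (Ne.symm hxu)).mp ⟨huC, hxC⟩
  rcases hD with huD | hvD
  · have hvD : v ∉ D := fun hvD => hDA ((Sym2.mem_and_mem_iff huv).mp ⟨huD, hvD⟩)
    obtain ⟨y, hyB, hyD⟩ := hBD
    rw [hB, Sym2.mem_iff] at hyB
    rcases hyB with rfl | rfl
    · exact hvD hyD
    · exact hCD' (hC.trans ((Sym2.mem_and_mem_iff (Ne.symm hxu)).mp ⟨huD, hyD⟩).symm)
  · obtain ⟨y, hyC, hyD⟩ := hCD
    rw [hC, Sym2.mem_iff] at hyC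
    rcases hyC with rfl | rfl
    · exact hDA ((Sym2.mem_and_mem_iff huv).mp ⟨hyD, hvD⟩)
    · exact hBD' (hB.trans ((Sym2.mem_and_mem_iff (Ne.symm hxv)).mp ⟨hvD, hyD⟩).symm)

/-- Four distinct pairwise intersecting elements of `Sym2 W` have a common element. -/
private lemma sym2_four {W : Type} {A B C D : Sym2 W}
    (hAB : ∃ x, x ∈ A ∧ x ∈ B) (hAC : ∃ x, x ∈ A ∧ x ∈ C) (hAD : ∃ x, x ∈ A ∧ x ∈ D)
    (hBC : ∃ x, x ∈ B ∧ x ∈ C) (hBD : ∃ x, x ∈ B ∧ x ∈ D) (hCD : ∃ x, x ∈ C ∧ x ∈ D)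
    (hab : A ≠ B) (hac : A ≠ C) (had : A ≠ D) (hbc : B ≠ C) (hbd : B ≠ D) (hcd : C ≠ D) :
    ∃ x, x ∈ A ∧ x ∈ B ∧ x ∈ C ∧ x ∈ D := by
  obtain ⟨⟨u, v⟩, hA⟩ := A.exists_rep
  subst hA
  by_cases huv : u = v
  · subst huv
    refine ⟨u, Sym2.mem_mk_left u u, ?_, ?_, ?_⟩
    · obtain ⟨x, hx1, hx2⟩ := hAB
      rcases Sym2.mem_iff.mp hx1 with rfl | rfl <;> exact hx2
    · obtain ⟨x, hx1, hx2⟩ := hAC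
      rcases Sym2.mem_iff.mp hx1 with rfl | rfl <;> exact hx2
    · obtain ⟨x, hx1, hx2⟩ := hAD
      rcases Sym2.mem_iff.mp hx1 with rfl | rfl <;> exact hx2
  · -- each of B, C, D contains u or v
    have hsh : ∀ {X : Sym2 W}, (∃ x, x ∈ s(u, v) ∧ x ∈ X) → u ∈ X ∨ v ∈ X := by
      rintro X ⟨x, hx1, hx2⟩
      rcases Sym2.mem_iff.mp hx1 with rfl | rfl
      · exact Or.inl hx2
      · exact Or.inr hx2
    have hB := hsh hAB; have hC := hsh hAC; have hD := hsh hAD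
    have hcomm : ∀ {X Y : Sym2 W}, (∃ x, x ∈ X ∧ x ∈ Y) → (∃ x, x ∈ Y ∧ x ∈ X) := by
      rintro X Y ⟨x, h1, h2⟩; exact ⟨x, h2, h1⟩
    by_cases huB : u ∈ B <;> by_cases huC : u ∈ C <;> by_cases huD : u ∈ D
    · exact ⟨u, Sym2.mem_mk_left u v, huB, huC, huD⟩
    · -- u ∈ B, u ∈ C, u ∉ D
      have hvD : v ∈ D := (hD.resolve_left huD)
      exact absurd (sym2_helper huv hvD huD huB (Or.inl huC) (hcomm hBD) (hcomm hCD) hBC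
        (Ne.symm hab) (Ne.symm hac) (Ne.symm hcd) hbc) id
    · -- u ∈ B, u ∉ C, u ∈ D
      have hvC : v ∈ C := (hC.resolve_left huC)
      exact absurd (sym2_helper huv hvC huC huB (Or.inl huD) (hcomm hBC) hCD hBD
        (Ne.symm hab) (Ne.symm had) hcd hbd) id
    · -- u ∈ B, u ∉ C, u ∉ D
      have hvC : v ∈ C := (hC.resolve_left huC)
      have hvD : v ∈ D := (hD.resolve_left huD)
      exact absurd (sym2_helper huv hvC huC huB (Or.inr hvD) (hcomm hBC) hCD hBD
        (Ne.symm hab) (Ne.symm had) hcd hbd) id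
    · -- u ∉ B, u ∈ C, u ∈ D
      have hvB : v ∈ B := (hB.resolve_left huB)
      exact absurd (sym2_helper huv hvB huB huC (Or.inl huD) hBC hBD hCD
        (Ne.symm hac) (Ne.symm had) hbd hcd) id
    · -- u ∉ B, u ∈ C, u ∉ D
      have hvB : v ∈ B := (hB.resolve_left huB)
      have hvD : v ∈ D := (hD.resolve_left huD)
      exact absurd (sym2_helper huv hvB huB huC (Or.inr hvD) hBC hBD hCD
        (Ne.symm hac) (Ne.symm had) hbd hcd) id
    · -- u ∉ B, u ∉ C, u ∈ D
      have hvB : v ∈ B := (hB.resolve_left huB)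
      have hvC : v ∈ C := (hC.resolve_left huC)
      exact absurd (sym2_helper huv hvB huB huD (Or.inr hvC) hBD hBC (hcomm hCD)
        (Ne.symm had) (Ne.symm hac) hbc (Ne.symm hcd)) id
    · have hvB : v ∈ B := (hB.resolve_left huB)
      have hvC : v ∈ C := (hC.resolve_left huC)
      have hvD : v ∈ D := (hD.resolve_left huD)
      exact ⟨v, Sym2.mem_mk_right u v, hvB, hvC, hvD⟩

variable {V : Type} {Γ : SimpleGraph V}

private lemma compl_adj_of (h1 : x ≠ y) (h2 : ¬ Γ.Adj x y) : Γᶜ.Adj x y := ⟨h1, h2⟩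

/-- A graph whose complement is a line graph contains no induced `K₃ ∪ K₁`
(i.e. the complement contains no claw). -/
lemma IsLineGraph.no_K3K1 (h : IsLineGraph Γᶜ) {a b c d : V}
    (hab : Γ.Adj a b) (hac : Γ.Adj a c) (hbc : Γ.Adj b c)
    (hda : ¬ Γ.Adj d a) (hdb : ¬ Γ.Adj d b) (hdc : ¬ Γ.Adj d c)
    (hna : d ≠ a) (hnb : d ≠ b) (hnc : d ≠ c) : False := by
  obtain ⟨W, H, ⟨φ⟩⟩ := h
  have hDA : (H.lineGraph).Adj (φ d) (φ a) := φ.map_adj_iff.mpr ⟨hna, hda⟩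
  have hDB : (H.lineGraph).Adj (φ d) (φ b) := φ.map_adj_iff.mpr ⟨hnb, hdb⟩
  have hDC : (H.lineGraph).Adj (φ d) (φ c) := φ.map_adj_iff.mpr ⟨hnc, hdc⟩
  have hnAB : ¬ (H.lineGraph).Adj (φ a) (φ b) := fun hh => (φ.map_adj_iff.mp hh).2 hab
  have hnAC : ¬ (H.lineGraph).Adj (φ a) (φ c) := fun hh => (φ.map_adj_iff.mp hh).2 hac
  have hnBC : ¬ (H.lineGraph).Adj (φ b) (φ c) := fun hh => (φ.map_adj_iff.mp hh).2 hbc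
  have hABne : φ a ≠ φ b := fun hh => hab.ne (φ.injective hh)
  have hACne : φ a ≠ φ c := fun hh => hac.ne (φ.injective hh)
  have hBCne : φ b ≠ φ c := fun hh => hbc.ne (φ.injective hh)
  rw [SimpleGraph.lineGraph_adj_iff_exists] at hDA hDB hDC
  obtain ⟨⟨u, v⟩, hE⟩ := Quot.exists_rep ((φ d : Sym2 W))
  -- each of φa φb φc contains u or v; two of them share
  have hmem : ∀ {e : H.edgeSet}, (∃ x, x ∈ (φ d : Sym2 W) ∧ x ∈ (e : Sym2 W)) →
      u ∈ (e : Sym2 W) ∨ v ∈ (e : Sym2 W) := by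
    rintro e ⟨x, hx1, hx2⟩
    rw [← hE] at hx1
    rcases Sym2.mem_iff.mp hx1 with rfl | rfl
    · exact Or.inl hx2
    · exact Or.inr hx2
  have hA := hmem hDA.2; have hB := hmem hDB.2; have hC := hmem hDC.2
  have pair : ∀ {e f : H.edgeSet}, e ≠ f → ¬ (H.lineGraph).Adj e f →
      ∀ x, x ∈ (e : Sym2 W) → x ∈ (f : Sym2 W) → False := by
    intro e f hne hnadj x h1 h2
    exact hnadj (SimpleGraph.lineGraph_adj_iff_exists.mpr ⟨hne, x, h1, h2⟩)
  rcases hA with hA | hA <;> rcases hB with hB | hB <;> rcases hC with hC | hC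
  · exact pair hABne hnAB u hA hB
  · exact pair hABne hnAB u hA hB
  · exact pair hACne hnAC u hA hC
  · exact pair hBCne hnBC v hB hC
  · exact pair hBCne hnBC u hB hC
  · exact pair hACne hnAC v hA hC
  · exact pair hABne hnAB v hA hB
  · exact pair hABne hnAB v hA hB


/-- A graph whose complement is a line graph contains no induced `K₂ ∪ 3K₁`
(the complement contains no `K₅` minus an edge). -/
lemma IsLineGraph.no_K2_3K1 (h : IsLineGraph Γᶜ) {a b d₁ d₂ d₃ : V}
    (hab : Γ.Adj a b)
    (h12 : ¬ Γ.Adj d₁ d₂) (h13 : ¬ Γ.Adj d₁ d₃) (h23 : ¬ Γ.Adj d₂ d₃)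
    (h1a : ¬ Γ.Adj d₁ a) (h1b : ¬ Γ.Adj d₁ b)
    (h2a : ¬ Γ.Adj d₂ a) (h2b : ¬ Γ.Adj d₂ b)
    (h3a : ¬ Γ.Adj d₃ a) (h3b : ¬ Γ.Adj d₃ b)
    (hn12 : d₁ ≠ d₂) (hn13 : d₁ ≠ d₃) (hn23 : d₂ ≠ d₃)
    (hn1a : d₁ ≠ a) (hn1b : d₁ ≠ b) (hn2a : d₂ ≠ a) (hn2b : d₂ ≠ b)
    (hn3a : d₃ ≠ a) (hn3b : d₃ ≠ b) : False := by
  obtain ⟨W, H, ⟨φ⟩⟩ := h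
  have lad : ∀ {x y : V}, x ≠ y → ¬ Γ.Adj x y →
      (φ x : Sym2 W) ≠ (φ y : Sym2 W) ∧ ∃ w, w ∈ (φ x : Sym2 W) ∧ w ∈ (φ y : Sym2 W) := by
    intro x y h1 h2
    have := SimpleGraph.lineGraph_adj_iff_exists.mp (φ.map_adj_iff.mpr ⟨h1, h2⟩)
    exact ⟨fun hh => this.1 (Subtype.ext hh), this.2⟩
  have hne : ∀ {x y : V}, x ≠ y → (φ x : Sym2 W) ≠ (φ y : Sym2 W) := by
    intro x y hxy hh
    exact hxy (φ.injective (Subtype.ext hh))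
  -- A and B are disjoint
  have hABdisj : ∀ x, x ∈ (φ a : Sym2 W) → x ∈ (φ b : Sym2 W) → False := by
    intro x h1 h2
    have : Γᶜ.Adj a b := φ.map_adj_iff.mp
      (SimpleGraph.lineGraph_adj_iff_exists.mpr ⟨fun hh => hab.ne (φ.injective hh), x, h1, h2⟩)
    exact this.2 hab
  obtain ⟨u, huA, hu1, hu2, hu3⟩ := sym2_four (lad hn1a.symm (fun hh => h1a hh.symm)).2
    (lad hn2a.symm (fun hh => h2a hh.symm)).2 (lad hn3a.symm (fun hh => h3a hh.symm)).2
    (lad hn12 h12).2 (lad hn13 h13).2 (lad hn23 h23).2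
    (hne hn1a.symm) (hne hn2a.symm) (hne hn3a.symm) (hne hn12) (hne hn13) (hne hn23)
  obtain ⟨w, hwB, hw1, hw2, hw3⟩ := sym2_four (lad hn1b.symm (fun hh => h1b hh.symm)).2
    (lad hn2b.symm (fun hh => h2b hh.symm)).2 (lad hn3b.symm (fun hh => h3b hh.symm)).2
    (lad hn12 h12).2 (lad hn13 h13).2 (lad hn23 h23).2
    (hne hn1b.symm) (hne hn2b.symm) (hne hn3b.symm) (hne hn12) (hne hn13) (hne hn23)
  have huw : u ≠ w := fun hh => hABdisj u huA (hh ▸ hwB)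
  have e1 : (φ d₁ : Sym2 W) = s(u, w) := (Sym2.mem_and_mem_iff huw).mp ⟨hu1, hw1⟩
  have e2 : (φ d₂ : Sym2 W) = s(u, w) := (Sym2.mem_and_mem_iff huw).mp ⟨hu2, hw2⟩
  exact hne hn12 (e1.trans e2.symm)

end LineGraphForbidden
section HardDirection
set_option linter.unusedSectionVars false

variable {G : Type} [Group G] [Fintype G]

lemma bridge_K3K1 (hlg : IsLineGraph (properEnhancedPowerGraph G)ᶜ)
    {a b c d : G}
    (ha : ¬ IsDominatingVertex (enhancedPowerGraph G) a)
    (hb : ¬ IsDominatingVertex (enhancedPowerGraph G) b)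
    (hc : ¬ IsDominatingVertex (enhancedPowerGraph G) c)
    (hd : ¬ IsDominatingVertex (enhancedPowerGraph G) d)
    (hab : (enhancedPowerGraph G).Adj a b) (hac : (enhancedPowerGraph G).Adj a c)
    (hbc : (enhancedPowerGraph G).Adj b c)
    (hda : ¬ (enhancedPowerGraph G).Adj d a) (hdb : ¬ (enhancedPowerGraph G).Adj d b)
    (hdc : ¬ (enhancedPowerGraph G).Adj d c)
    (hna : d ≠ a) (hnb : d ≠ b) (hnc : d ≠ c) : False := by
  refine hlg.no_K3K1 (a := ⟨a, ha⟩) (b := ⟨b, hb⟩) (c := ⟨c, hc⟩) (d := ⟨d, hd⟩)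
    hab hac hbc hda hdb hdc ?_ ?_ ?_ <;>
  · intro hh
    first
      | exact hna (congrArg Subtype.val hh)
      | exact hnb (congrArg Subtype.val hh)
      | exact hnc (congrArg Subtype.val hh)

lemma bridge_K2_3K1 (hlg : IsLineGraph (properEnhancedPowerGraph G)ᶜ)
    {a b d₁ d₂ d₃ : G}
    (ha : ¬ IsDominatingVertex (enhancedPowerGraph G) a)
    (hb : ¬ IsDominatingVertex (enhancedPowerGraph G) b)
    (h1 : ¬ IsDominatingVertex (enhancedPowerGraph G) d₁)
    (h2 : ¬ IsDominatingVertex (enhancedPowerGraph G) d₂)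
    (h3 : ¬ IsDominatingVertex (enhancedPowerGraph G) d₃)
    (hab : (enhancedPowerGraph G).Adj a b)
    (h12 : ¬ (enhancedPowerGraph G).Adj d₁ d₂) (h13 : ¬ (enhancedPowerGraph G).Adj d₁ d₃)
    (h23 : ¬ (enhancedPowerGraph G).Adj d₂ d₃)
    (h1a : ¬ (enhancedPowerGraph G).Adj d₁ a) (h1b : ¬ (enhancedPowerGraph G).Adj d₁ b)
    (h2a : ¬ (enhancedPowerGraph G).Adj d₂ a) (h2b : ¬ (enhancedPowerGraph G).Adj d₂ b)
    (h3a : ¬ (enhancedPowerGraph G).Adj d₃ a) (h3b : ¬ (enhancedPowerGraph G).Adj d₃ b)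
    (hn12 : d₁ ≠ d₂) (hn13 : d₁ ≠ d₃) (hn23 : d₂ ≠ d₃)
    (hn1a : d₁ ≠ a) (hn1b : d₁ ≠ b) (hn2a : d₂ ≠ a) (hn2b : d₂ ≠ b)
    (hn3a : d₃ ≠ a) (hn3b : d₃ ≠ b) : False := by
  refine hlg.no_K2_3K1 (a := ⟨a, ha⟩) (b := ⟨b, hb⟩) (d₁ := ⟨d₁, h1⟩) (d₂ := ⟨d₂, h2⟩)
    (d₃ := ⟨d₃, h3⟩) hab h12 h13 h23 h1a h1b h2a h2b h3a h3b ?_ ?_ ?_ ?_ ?_ ?_ ?_ ?_ ?_ <;>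
  · intro hh
    first
      | exact hn12 (congrArg Subtype.val hh)
      | exact hn13 (congrArg Subtype.val hh)
      | exact hn23 (congrArg Subtype.val hh)
      | exact hn1a (congrArg Subtype.val hh)
      | exact hn1b (congrArg Subtype.val hh)
      | exact hn2a (congrArg Subtype.val hh)
      | exact hn2b (congrArg Subtype.val hh)
      | exact hn3a (congrArg Subtype.val hh)
      | exact hn3b (congrArg Subtype.val hh)

lemma ne_inv_of_sq {g : G} (hgg : g * g ≠ 1) : g ≠ g⁻¹ := by
  intro h
  exact hgg (by nth_rewrite 2 [h]; exact mul_inv_cancel g)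

lemma three_max (hnc : ¬ IsCyclic G) (hlg : IsLineGraph (properEnhancedPowerGraph G)ᶜ)
    {M : Subgroup G} {g : G} (hM : IsMaxCyclic M) (hg : zpowers g = M) (hgg : g * g ≠ 1) :
    ∃ N₁ N₂ : Subgroup G, IsMaxCyclic N₁ ∧ IsMaxCyclic N₂ ∧ N₁ ≠ M ∧ N₂ ≠ M ∧ N₁ ≠ N₂ ∧
      ∀ K : Subgroup G, IsMaxCyclic K → K = M ∨ K = N₁ ∨ K = N₂ := by
  obtain ⟨N₁, hN₁, hne1⟩ := exists_maxCyclic_ne hnc hM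
  have hN₂ : ∃ N₂ : Subgroup G, IsMaxCyclic N₂ ∧ N₂ ≠ M ∧ N₂ ≠ N₁ := by
    by_contra hc2
    push_neg at hc2
    have hun : ∀ x : G, x ∈ M ∨ x ∈ N₁ := by
      intro x
      obtain ⟨K, hK, hxK⟩ := exists_maxCyclic_mem x
      by_cases h1 : K = M
      · exact Or.inl (h1 ▸ hxK)
      · by_cases h2 : K = N₁
        · exact Or.inr (h2 ▸ hxK)
        · exact absurd (hc2 K hK h1) (fun hh => h2 hh)
    rcases not_union_two hun with hle | hle
    · exact hne1 (hM.2 N₁ hN₁.1 hle)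
    · exact hne1 (hN₁.2 M hM.1 hle).symm
  obtain ⟨N₂, hN₂, h2M, h21⟩ := hN₂
  refine ⟨N₁, N₂, hN₁, hN₂, hne1, h2M, Ne.symm h21, ?_⟩
  by_contra hthree
  push_neg at hthree
  obtain ⟨K, hK, k1, k2, k3⟩ := hthree
  obtain ⟨g₁, hg₁⟩ := exists_gen hN₁.1
  obtain ⟨g₂, hg₂⟩ := exists_gen hN₂.1
  obtain ⟨gK, hgK⟩ := exists_gen hK.1
  have hg' : zpowers g⁻¹ = M := zpowers_inv.trans hg
  have hadj : (enhancedPowerGraph G).Adj g g⁻¹ :=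
    ⟨ne_inv_of_sq hgg, g, mem_zpowers g, inv_mem (mem_zpowers g)⟩
  exact bridge_K2_3K1 hlg
    (gen_not_dominating hnc hM hg) (gen_not_dominating hnc hM hg')
    (gen_not_dominating hnc hN₁ hg₁) (gen_not_dominating hnc hN₂ hg₂)
    (gen_not_dominating hnc hK hgK)
    hadj
    (gen_not_adj hN₁ hN₂ hg₁ hg₂ (Ne.symm h21)).1
    (gen_not_adj hN₁ hK hg₁ hgK (fun hh => k2 hh.symm)).1
    (gen_not_adj hN₂ hK hg₂ hgK (fun hh => k3 hh.symm)).1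
    (gen_not_adj hN₁ hM hg₁ hg hne1).1 (gen_not_adj hN₁ hM hg₁ hg' hne1).1
    (gen_not_adj hN₂ hM hg₂ hg h2M).1 (gen_not_adj hN₂ hM hg₂ hg' h2M).1
    (gen_not_adj hK hM hgK hg (fun hh => k1 hh)).1 (gen_not_adj hK hM hgK hg' (fun hh => k1 hh)).1
    (gen_not_adj hN₁ hN₂ hg₁ hg₂ (Ne.symm h21)).2
    (gen_not_adj hN₁ hK hg₁ hgK (fun hh => k2 hh.symm)).2
    (gen_not_adj hN₂ hK hg₂ hgK (fun hh => k3 hh.symm)).2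
    (gen_not_adj hN₁ hM hg₁ hg hne1).2 (gen_not_adj hN₁ hM hg₁ hg' hne1).2
    (gen_not_adj hN₂ hM hg₂ hg h2M).2 (gen_not_adj hN₂ hM hg₂ hg' h2M).2
    (gen_not_adj hK hM hgK hg (fun hh => k1 hh)).2 (gen_not_adj hK hM hgK hg' (fun hh => k1 hh)).2

lemma wedge (hnc : ¬ IsCyclic G) (hlg : IsLineGraph (properEnhancedPowerGraph G)ᶜ)
    {M N₁ N₂ : Subgroup G} {g : G}
    (hM : IsMaxCyclic M) (hN₁ : IsMaxCyclic N₁) (hN₂ : IsMaxCyclic N₂)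
    (h1M : N₁ ≠ M) (h2M : N₂ ≠ M)
    (hg : zpowers g = M) (hgg : g * g ≠ 1) :
    ∀ b ∈ M, b = g ∨ b = g⁻¹ ∨ (b ∈ N₁ ∧ b ∈ N₂) := by
  intro b hb
  by_cases hbg : b = g
  · exact Or.inl hbg
  by_cases hbg' : b = g⁻¹
  · exact Or.inr (Or.inl hbg')
  refine Or.inr (Or.inr ?_)
  by_cases hdom : IsDominatingVertex (enhancedPowerGraph G) b
  · exact ⟨isDominating_iff.mp hdom N₁ hN₁, isDominating_iff.mp hdom N₂ hN₂⟩
  have hg' : zpowers g⁻¹ = M := zpowers_inv.trans hg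
  have hbzp : b ∈ zpowers g := hg.symm ▸ hb
  have hbzp' : b ∈ zpowers g⁻¹ := hg'.symm ▸ hb
  have key : ∀ (N : Subgroup G), IsMaxCyclic N → N ≠ M → b ∈ N := by
    intro N hN hNM
    by_contra hbN
    obtain ⟨g₁, hg₁⟩ := exists_gen hN.1
    refine bridge_K3K1 hlg
      (gen_not_dominating hnc hM hg) (gen_not_dominating hnc hM hg') hdom
      (gen_not_dominating hnc hN hg₁)
      ⟨ne_inv_of_sq hgg, g, mem_zpowers g, inv_mem (mem_zpowers g)⟩
      ⟨fun hh => hbg hh.symm, g, mem_zpowers g, hbzp⟩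
      ⟨fun hh => hbg' hh.symm, g, inv_mem (mem_zpowers g), hbzp⟩
      (gen_not_adj hN hM hg₁ hg hNM).1 (gen_not_adj hN hM hg₁ hg' hNM).1
      ?_
      (gen_not_adj hN hM hg₁ hg hNM).2 (gen_not_adj hN hM hg₁ hg' hNM).2
      ?_
    · intro hadj
      obtain ⟨-, K, hK, h1, h2⟩ := adj_iff_maxCyclic.mp hadj
      exact hbN ((eq_of_gen_mem hN hg₁ hK h1) ▸ h2)
    · intro hh
      exact hbN (hh ▸ (hg₁ ▸ mem_zpowers g₁))
  exact ⟨key N₁ hN₁ h1M, key N₂ hN₂ h2M⟩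

lemma exists_central (hnc : ¬ IsCyclic G) (hlg : IsLineGraph (properEnhancedPowerGraph G)ᶜ)
    {M N₁ N₂ : Subgroup G} {g : G}
    (hM : IsMaxCyclic M) (hN₁ : IsMaxCyclic N₁) (hN₂ : IsMaxCyclic N₂)
    (h1M : N₁ ≠ M) (h2M : N₂ ≠ M)
    (hcover : ∀ x : G, x ∈ M ∨ x ∈ N₁ ∨ x ∈ N₂)
    (hg : zpowers g = M) (hgg : g * g ≠ 1) :
    ∃ z : G, z ∈ M ∧ z ∈ N₁ ∧ z ∈ N₂ ∧ z ≠ 1 := by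
  by_contra hno
  push_neg at hno
  have hgM : g ∈ M := hg ▸ mem_zpowers g
  have hgN₁ : g ∉ N₁ := gen_not_mem hM hg hN₁ h1M
  have hgN₂ : g ∉ N₂ := gen_not_mem hM hg hN₂ h2M
  obtain ⟨b, hbN₁, hbM⟩ : ∃ b, b ∈ N₁ ∧ b ∉ M := by
    apply SetLike.not_le_iff_exists.mp
    intro hle
    exact h1M (hN₁.2 M hM.1 hle).symm
  have hgb : g * b ∈ N₂ := by
    rcases hcover (g * b) with hh | hh | hh
    · exact absurd ((mul_mem_cancel_left hgM).mp hh) hbM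
    · exact absurd ((mul_mem_cancel_right hbN₁).mp hh) hgN₁
    · exact hh
  have hgb' : g⁻¹ * b ∈ N₂ := by
    rcases hcover (g⁻¹ * b) with hh | hh | hh
    · exact absurd ((mul_mem_cancel_left (inv_mem hgM)).mp hh) hbM
    · have : g⁻¹ ∈ N₁ := (mul_mem_cancel_right hbN₁).mp hh
      exact absurd ((inv_mem_iff (x := g)).mp this) hgN₁
    · exact hh
  have hg2N₂ : g * g ∈ N₂ := by
    have hmem := mul_mem hgb (inv_mem hgb')
    have he : (g * b) * (g⁻¹ * b)⁻¹ = g * g := by group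
    rwa [he] at hmem
  rcases wedge hnc hlg hM hN₁ hN₂ h1M h2M hg hgg (g * g) (mul_mem hgM hgM) with hh | hh | hh
  · have : g = 1 := by
      have := hh.trans (mul_one g).symm
      exact mul_left_cancel this
    exact hgg (by rw [this, one_mul])
  · rw [hh] at hg2N₂
    exact hgN₂ ((inv_mem_iff (x := g)).mp hg2N₂)
  · exact hgg (hno (g * g) (mul_mem hgM hgM) hh.1 hh.2)

lemma core_structure (hnc : ¬ IsCyclic G) (hlg : IsLineGraph (properEnhancedPowerGraph G)ᶜ)
    {M N₁ N₂ : Subgroup G} {g z : G}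
    (hM : IsMaxCyclic M) (hN₁ : IsMaxCyclic N₁) (hN₂ : IsMaxCyclic N₂)
    (h1M : N₁ ≠ M) (h2M : N₂ ≠ M)
    (hg : zpowers g = M) (hgg : g * g ≠ 1)
    (hzM : z ∈ M) (hzN₁ : z ∈ N₁) (hzN₂ : z ∈ N₂) (hz1 : z ≠ 1) :
    g * g = z ∧ z * z = 1 ∧ (∀ b ∈ M, b = 1 ∨ b = z ∨ b = g ∨ b = g⁻¹) := by
  have hgN₁ : g ∉ N₁ := gen_not_mem hM hg hN₁ h1M
  have hu : ∀ w : G, w ∈ M → w ∈ N₁ → w ∈ N₂ → w ≠ 1 → g * w = g⁻¹ := by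
    intro w hwM hwN₁ hwN₂ hw1
    have hgM : g ∈ M := hg ▸ mem_zpowers g
    rcases wedge hnc hlg hM hN₁ hN₂ h1M h2M hg hgg (g * w) (mul_mem hgM hwM) with hh | hh | hh
    · exact absurd (mul_left_cancel (hh.trans (mul_one g).symm)) hw1
    · exact hh
    · exact absurd ((mul_mem_cancel_right hwN₁).mp hh.1) hgN₁
  have hgz : g * z = g⁻¹ := hu z hzM hzN₁ hzN₂ hz1
  have hzz : z * z = 1 := by
    by_contra hc
    have h1 := hu (z * z) (mul_mem hzM hzM) (mul_mem hzN₁ hzN₁) (mul_mem hzN₂ hzN₂) hc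
    have h2 : g * (z * z) = g * z := h1.trans hgz.symm
    have h3 : z * z = z := mul_left_cancel h2
    exact hz1 (mul_left_cancel (h3.trans (mul_one z).symm))
  have hg2 : g * g = z := by
    have h1 : z = g⁻¹ * g⁻¹ := by
      have h0 := congrArg (fun t => g⁻¹ * t) hgz
      simpa [inv_mul_cancel_left] using h0
    have h2 : z⁻¹ = g * g := by
      rw [h1, mul_inv_rev, inv_inv]
    have h3 : z⁻¹ = z := inv_eq_of_mul_eq_one_right hzz
    rw [← h2, h3]
  refine ⟨hg2, hzz, ?_⟩
  intro b hb
  rcases wedge hnc hlg hM hN₁ hN₂ h1M h2M hg hgg b hb with hh | hh | hh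
  · exact Or.inr (Or.inr (Or.inl hh))
  · exact Or.inr (Or.inr (Or.inr hh))
  · by_cases hb1 : b = 1
    · exact Or.inl hb1
    · refine Or.inr (Or.inl ?_)
      have := (hu b hb hh.1 hh.2 hb1).trans hgz.symm
      exact mul_left_cancel this
end HardDirection
section BuildQ8
set_option linter.unusedSectionVars false

variable {G : Type} [Group G] [Fintype G]

lemma build_q8 {M N₁ N₂ : Subgroup G} {g h k z : G}
    (hM : IsMaxCyclic M) (hN₁ : IsMaxCyclic N₁) (hN₂ : IsMaxCyclic N₂)
    (h1M : N₁ ≠ M) (h2M : N₂ ≠ M) (h12 : N₁ ≠ N₂)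
    (hg : zpowers g = M) (hh : zpowers h = N₁) (hk : zpowers k = N₂)
    (hcover : ∀ x : G, x ∈ M ∨ x ∈ N₁ ∨ x ∈ N₂)
    (hz1 : z ≠ 1) (hzz : z * z = 1)
    (hg2 : g * g = z) (hh2 : h * h = z) (hk2 : k * k = z)
    (henumN₁ : ∀ b ∈ N₁, b = 1 ∨ b = z ∨ b = h ∨ b = h⁻¹)
    (henumN₂ : ∀ b ∈ N₂, b = 1 ∨ b = z ∨ b = k ∨ b = k⁻¹) :
    Nonempty (G ≃* QuaternionGroup 2) := by
  have hgM : g ∈ M := hg ▸ mem_zpowers g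
  have hhN₁ : h ∈ N₁ := hh ▸ mem_zpowers h
  have hkN₂ : k ∈ N₂ := hk ▸ mem_zpowers k
  have hgN₁ : g ∉ N₁ := gen_not_mem hM hg hN₁ h1M
  have hgN₂ : g ∉ N₂ := gen_not_mem hM hg hN₂ h2M
  have hhM : h ∉ M := gen_not_mem hN₁ hh hM h1M.symm
  have hkM : k ∉ M := gen_not_mem hN₂ hk hM h2M.symm
  have hgg : g * g ≠ 1 := fun hc => hz1 (hg2 ▸ hc)
  have hzM : z ∈ M := hg2 ▸ mul_mem hgM hgM
  -- g * h lands in N₂ and squares to z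
  have ghN₂ : g * h ∈ N₂ := by
    rcases hcover (g * h) with hc | hc | hc
    · exact absurd ((mul_mem_cancel_left hgM).mp hc) hhM
    · exact absurd ((mul_mem_cancel_right hhN₁).mp hc) hgN₁
    · exact hc
  have hzinv : z⁻¹ = z := inv_eq_of_mul_eq_one_right hzz
  have hgh_cases : g * h = k ∨ g * h = k⁻¹ := by
    rcases henumN₂ (g * h) ghN₂ with hc | hc | hc | hc
    · exfalso
      have hhg : h = g⁻¹ := eq_inv_of_mul_eq_one_right hc
      exact hhM (hhg ▸ inv_mem hgM)
    · exfalso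
      have : g * h = g * g := hc.trans hg2.symm
      exact hhM ((mul_left_cancel this) ▸ hgM)
    · exact Or.inl hc
    · exact Or.inr hc
  have ghz : (g * h) * (g * h) = z := by
    rcases hgh_cases with hc | hc
    · rw [hc]; exact hk2
    · rw [hc, ← mul_inv_rev, hk2, hzinv]
  -- basic relations
  have rel1 : h * g * h = g := by
    have h1 : g * (h * g * h) = g * g := by
      have := ghz.trans hg2.symm
      calc g * (h * g * h) = (g * h) * (g * h) := by group
        _ = g * g := this
    exact mul_left_cancel h1
  have hinv : h⁻¹ = h * z := by
    symm
    apply eq_inv_of_mul_eq_one_left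
    calc h * z * h = h * (z * h) := by group
      _ = h * ((h * h) * h) := by rw [hh2]
      _ = (h * h) * (h * h) := by group
      _ = z * z := by rw [hh2]
      _ = 1 := hzz
  have hgh3 : g * h = h * g ^ 3 := by
    have h1 : g * h = h⁻¹ * g := by
      have := congrArg (fun t => h⁻¹ * t) rel1
      simpa [← mul_assoc] using this
    have h2 : g ^ 3 = z * g := by
      rw [pow_succ, pow_two, hg2]
    rw [h1, hinv, h2]
    group
  have hsemi : ∀ m : ℕ, g ^ m * h = h * g ^ (3 * m) := by
    intro m
    induction m with
    | zero => simp
    | succ n ih =>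
      calc g ^ (n + 1) * h = g ^ n * (g * h) := by rw [pow_succ]; group
        _ = g ^ n * (h * g ^ 3) := by rw [hgh3]
        _ = (g ^ n * h) * g ^ 3 := by group
        _ = h * g ^ (3 * n) * g ^ 3 := by rw [ih]
        _ = h * g ^ (3 * n + 3) := by rw [pow_add]; group
        _ = h * g ^ (3 * (n + 1)) := by ring_nf
  have hord4 : g ^ 4 = 1 := by
    have h1 : g ^ 4 = (g * g) * (g * g) := by
      rw [show (4:ℕ) = 2 + 2 from rfl, pow_add, pow_two]
    rw [h1, hg2, hzz]
  have hpow : ∀ m n : ℕ, ((m : ZMod 4) = (n : ZMod 4)) → g ^ m = g ^ n := by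
    intro m n hmn
    have h1 : m ≡ n [MOD 4] := (ZMod.natCast_eq_natCast_iff m n 4).mp hmn
    have h2 : orderOf g ∣ 4 := orderOf_dvd_of_pow_eq_one hord4
    exact pow_eq_pow_iff_modEq.mpr (Nat.ModEq.of_dvd h2 h1)
  have h4 : (4 : ZMod 4) = 0 := by decide
  have hvv : ∀ c : ZMod 4, ((c.val : ℕ) : ZMod 4) = c := fun c => by
    rw [ZMod.natCast_val, ZMod.cast_id]
  -- the homomorphism
  set f : QuaternionGroup 2 → G := fun q =>
    match q with
    | .a i => g ^ i.val
    | .xa i => h * g ^ i.val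
    with hf
  have hmul : ∀ q r : QuaternionGroup 2, f (q * r) = f q * f r := by
    rintro (i | i) (j | j)
    · show g ^ ((i + j).val) = g ^ i.val * g ^ j.val
      rw [← pow_add]
      apply hpow
      push_cast [hvv]
      ring
    · show h * g ^ ((j - i).val) = g ^ i.val * (h * g ^ j.val)
      rw [← mul_assoc, hsemi, mul_assoc, ← pow_add]
      congr 1
      apply hpow
      push_cast [hvv]
      linear_combination (-i) * h4
    · show h * g ^ ((i + j).val) = (h * g ^ i.val) * g ^ j.val
      rw [mul_assoc, ← pow_add]
      congr 1
      apply hpow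
      push_cast [hvv]
      ring
    · show g ^ (((2 : ℕ) + j - i).val) = (h * g ^ i.val) * (h * g ^ j.val)
      have step : (h * g ^ i.val) * (h * g ^ j.val) = (h * h) * (g ^ (3 * i.val) * g ^ j.val) := by
        calc (h * g ^ i.val) * (h * g ^ j.val) = h * ((g ^ i.val * h) * g ^ j.val) := by group
          _ = h * ((h * g ^ (3 * i.val)) * g ^ j.val) := by rw [hsemi]
          _ = (h * h) * (g ^ (3 * i.val) * g ^ j.val) := by group
      rw [step, hh2, ← hg2, ← pow_add]
      have h2 : g * g = g ^ 2 := (pow_two g).symm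
      rw [h2, ← pow_add]
      apply hpow
      push_cast [hvv]
      linear_combination (-i) * h4
  let φ : QuaternionGroup 2 →* G := MonoidHom.mk' f hmul
  have hinj : Function.Injective φ := by
    rw [injective_iff_map_eq_one]
    rintro (i | i) hq
    · show QuaternionGroup.a i = 1
      have hq' : g ^ i.val = 1 := hq
      have hlt : i.val < 4 := i.val_lt
      have hg1 : g ≠ 1 := fun hc => hgg (by rw [hc, one_mul])
      interval_cases hi : i.val
      · have : i = 0 := by
          have := ZMod.val_eq_zero (n := 4) i
          exact this.mp hi
        rw [this]; rfl
      · exact absurd (by rw [← pow_one g]; exact hq') hg1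
      · exfalso
        rw [pow_two] at hq'
        exact hgg hq'
      · exfalso
        apply hg1
        calc g = g ^ 4 * (g ^ 3)⁻¹ := by group
          _ = 1 * (g ^ 3)⁻¹ := by rw [hord4]
          _ = 1 := by rw [hq', inv_one, mul_one]
    · exfalso
      have hq' : h * g ^ i.val = 1 := hq
      have : h = (g ^ i.val)⁻¹ := eq_inv_of_mul_eq_one_left hq'
      exact hhM (this ▸ inv_mem (hg ▸ pow_mem (mem_zpowers g) i.val : g ^ i.val ∈ M))
  have himg : ∀ x : G, x ∈ M ∨ x ∈ N₁ ∨ x ∈ N₂ → ∃ q, φ q = x := by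
    intro x hx
    have hval2 : ((2 : ZMod 4)).val = 2 := rfl
    have hval0 : ((0 : ZMod 4)).val = 0 := rfl
    have hval1 : ((1 : ZMod 4)).val = 1 := rfl
    have hval3 : ((3 : ZMod 4)).val = 3 := rfl
    have himg1 : φ 1 = 1 := map_one φ
    have himgz : φ (.a 2) = z := by
      show g ^ ((2 : ZMod 4)).val = z
      rw [hval2, pow_two, hg2]
    have himgh : φ (.xa 0) = h := by
      show h * g ^ ((0 : ZMod 4)).val = h
      rw [hval0, pow_zero, mul_one]
    have himghinv : φ (.xa 2) = h⁻¹ := by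
      show h * g ^ ((2 : ZMod 4)).val = h⁻¹
      rw [hval2, pow_two, hg2, ← hinv]
    have himggh : φ (.xa 3) = g * h := by
      show h * g ^ ((3 : ZMod 4)).val = g * h
      rw [hval3, ← hgh3]
    have himghg : φ (.xa 1) = (g * h)⁻¹ := by
      show h * g ^ ((1 : ZMod 4)).val = (g * h)⁻¹
      rw [hval1, pow_one]
      symm
      apply inv_eq_of_mul_eq_one_right
      calc (g * h) * (h * g) = g * (h * h) * g := by group
        _ = g * z * g := by rw [hh2]
        _ = g * (g * g) * g := by rw [hg2]
        _ = (g * g) * (g * g) := by group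
        _ = z * z := by rw [hg2]
        _ = 1 := hzz
    rcases hx with hx | hx | hx
    · rw [← hg] at hx
      obtain ⟨n, hn⟩ := mem_powers_iff_mem_zpowers.mpr hx
      refine ⟨.a (n : ZMod 4), ?_⟩
      show g ^ (((n : ZMod 4)).val) = x
      rw [← hn]
      exact hpow _ _ (by push_cast [hvv]; ring)
    · rcases henumN₁ x hx with rfl | rfl | rfl | rfl
      · exact ⟨1, himg1⟩
      · exact ⟨.a 2, himgz⟩
      · exact ⟨.xa 0, himgh⟩
      · exact ⟨.xa 2, himghinv⟩
    · rcases henumN₂ x hx with rfl | rfl | rfl | rfl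
      · exact ⟨1, himg1⟩
      · exact ⟨.a 2, himgz⟩
      · rcases hgh_cases with hc | hc
        · exact ⟨.xa 3, himggh.trans hc⟩
        · refine ⟨.xa 1, himghg.trans ?_⟩
          rw [hc, inv_inv]
      · rcases hgh_cases with hc | hc
        · exact ⟨.xa 1, himghg.trans (by rw [hc])⟩
        · exact ⟨.xa 3, himggh.trans (by rw [hc])⟩
  have hsurj : Function.Surjective φ := fun x => himg x (hcover x)
  exact ⟨(MulEquiv.ofBijective φ ⟨hinj, hsurj⟩).symm⟩

end BuildQ8
section ElemAb
set_option linter.unusedSectionVars false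

variable {G : Type} [Group G] [Fintype G]

lemma elemAbelian_of_sq (hnc : ¬ IsCyclic G) (hsq : ∀ x : G, x * x = 1) :
    IsElemAbelianTwo G := by
  haveI : Fact (Nat.Prime 2) := ⟨by norm_num⟩
  have hinv : ∀ x : G, x⁻¹ = x := fun x => inv_eq_of_mul_eq_one_right (hsq x)
  have hcomm : ∀ x y : G, x * y = y * x := by
    intro x y
    have h1 : (x * y)⁻¹ = x * y := hinv _
    calc x * y = (x * y)⁻¹ := h1.symm
      _ = y⁻¹ * x⁻¹ := mul_inv_rev x y
      _ = y * x := by rw [hinv, hinv]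
  letI cg : CommGroup G := { (inferInstance : Group G) with mul_comm := hcomm }
  letI : Module (ZMod 2) (Additive G) := AddCommGroup.zmodModule (by
    intro x
    show (2 : ℕ) • x = 0
    rw [two_nsmul]
    exact hsq (Additive.toMul x))
  haveI : Module.Finite (ZMod 2) (Additive G) := Module.Finite.of_finite
  haveI : Nontrivial G := by
    rcases subsingleton_or_nontrivial G with hs | hs
    · exact absurd (isCyclic_of_subsingleton) hnc
    · exact hs
  haveI : Nontrivial (Additive G) := ‹Nontrivial G›
  set k := Module.finrank (ZMod 2) (Additive G) with hk
  have e1 := (Module.finBasis (ZMod 2) (Additive G)).equivFun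
  have e2 := AddEquiv.toMultiplicative e1.toAddEquiv
  have e3 := MulEquiv.funMultiplicative (Fin k) (ZMod 2)
  have etot : G ≃* (Fin k → Multiplicative (ZMod 2)) :=
    ((MulEquiv.multiplicativeAdditive G).symm.trans e2).trans e3
  refine ⟨k, ?_, ⟨etot⟩⟩
  by_contra hk1
  push_neg at hk1
  interval_cases k
  · have hzero : Module.finrank (ZMod 2) (Additive G) = 0 := hk.symm
    haveI := Module.finrank_pos_iff (R := ZMod 2) (M := Additive G)
    have hpos : 0 < Module.finrank (ZMod 2) (Additive G) :=
      Module.finrank_pos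
    omega

lemma sq_of_elemAbelian (he : IsElemAbelianTwo G) : ∀ x : G, x * x = 1 := by
  obtain ⟨k, -, ⟨e⟩⟩ := he
  intro x
  have h1 : e (x * x) = 1 := by
    rw [map_mul]
    funext i
    exact (by decide : ∀ t : Multiplicative (ZMod 2), t * t = 1) _
  exact e.injective (h1.trans (map_one e).symm)

end ElemAb
section HardMain
set_option linter.unusedSectionVars false

variable {G : Type} [Group G] [Fintype G]

lemma hard_direction (hnc : ¬ IsCyclic G) (hlg : IsLineGraph (properEnhancedPowerGraph G)ᶜ) :
    IsElemAbelianTwo G ∨ Nonempty (G ≃* QuaternionGroup 2) := by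
  by_cases hsq : ∀ x : G, x * x = 1
  · exact Or.inl (elemAbelian_of_sq hnc hsq)
  right
  push_neg at hsq
  obtain ⟨x, hx⟩ := hsq
  obtain ⟨M, hM, hxM⟩ := exists_maxCyclic_mem x
  obtain ⟨g, hg⟩ := exists_gen hM.1
  have hgg : g * g ≠ 1 := fun hcon => hx (sq_one_of_mem hcon (hg.symm ▸ hxM))
  obtain ⟨N₁, N₂, hN₁, hN₂, h1M, h2M, h12, hthree⟩ := three_max hnc hlg hM hg hgg
  have hcover : ∀ y : G, y ∈ M ∨ y ∈ N₁ ∨ y ∈ N₂ := by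
    intro y
    obtain ⟨K, hK, hyK⟩ := exists_maxCyclic_mem y
    rcases hthree K hK with h | h | h
    · exact Or.inl (h ▸ hyK)
    · exact Or.inr (Or.inl (h ▸ hyK))
    · exact Or.inr (Or.inr (h ▸ hyK))
  obtain ⟨z, hzM, hzN₁, hzN₂, hz1⟩ :=
    exists_central hnc hlg hM hN₁ hN₂ h1M h2M hcover hg hgg
  obtain ⟨hg2, hzz, henumM⟩ :=
    core_structure hnc hlg hM hN₁ hN₂ h1M h2M hg hgg hzM hzN₁ hzN₂ hz1
  -- generator of N₁
  obtain ⟨h, hh⟩ := exists_gen hN₁.1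
  have hhh : h * h ≠ 1 := by
    intro hcon
    rcases zpowers_sq_one hcon z (hh.symm ▸ hzN₁) with h0 | h0
    · exact hz1 h0
    · -- z = h, so N₁ = zpowers z ≤ M
      have : N₁ ≤ M := hh ▸ (h0 ▸ zpowers_le.mpr hzM)
      exact h1M (hN₁.2 M hM.1 this).symm
  have hcover₁ : ∀ y : G, y ∈ N₁ ∨ y ∈ M ∨ y ∈ N₂ := by
    intro y; rcases hcover y with h0 | h0 | h0 <;> tauto
  obtain ⟨hh2, -, henumN₁⟩ :=
    core_structure hnc hlg hN₁ hM hN₂ h1M.symm h12.symm hh hhh hzN₁ hzM hzN₂ hz1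
  -- generator of N₂
  obtain ⟨k, hk⟩ := exists_gen hN₂.1
  have hkk : k * k ≠ 1 := by
    intro hcon
    rcases zpowers_sq_one hcon z (hk.symm ▸ hzN₂) with h0 | h0
    · exact hz1 h0
    · have : N₂ ≤ M := hk ▸ (h0 ▸ zpowers_le.mpr hzM)
      exact h2M (hN₂.2 M hM.1 this).symm
  obtain ⟨hk2, -, henumN₂⟩ :=
    core_structure hnc hlg hN₂ hM hN₁ h2M.symm h12 hk hkk hzN₂ hzM hzN₁ hz1
  exact build_q8 hM hN₁ hN₂ h1M h2M h12 hg hh hk hcover hz1 hzz hg2 hh2 hk2 henumN₁ henumN₂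

end HardMain
section EasyElem
set_option linter.unusedSectionVars false
open SimpleGraph

/-- A complete graph is a line graph (of a star). -/
lemma isLineGraph_of_complete {V : Type} {Γ : SimpleGraph V}
    (hc : ∀ v w : V, Γ.Adj v w ↔ v ≠ w) : IsLineGraph Γ := by
  classical
  let H : SimpleGraph (Option V) :=
    { Adj := fun x y => x ≠ y ∧ (x = none ∨ y = none)
      symm := ⟨by rintro x y ⟨h1, h2⟩; exact ⟨h1.symm, h2.symm⟩⟩
      loopless := ⟨by rintro x ⟨h1, -⟩; exact h1 rfl⟩ }
  have hmem : ∀ v : V, s(none, some v) ∈ H.edgeSet := by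
    intro v
    rw [SimpleGraph.mem_edgeSet]
    exact ⟨by simp, Or.inl rfl⟩
  let F : V → H.edgeSet := fun v => ⟨s(none, some v), hmem v⟩
  have hFinj : Function.Injective F := by
    intro v w hvw
    have h2 := congrArg Subtype.val hvw
    simpa [F, Sym2.eq_iff] using h2
  have hFsurj : Function.Surjective F := by
    rintro ⟨e, he⟩
    obtain ⟨⟨x, y⟩, rfl⟩ := e.exists_rep
    rw [SimpleGraph.mem_edgeSet] at he
    obtain ⟨hne, hor⟩ := he
    rcases hor with rfl | rfl
    · match y, hne with
      | some v, _ => exact ⟨v, rfl⟩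
      | none, hne => exact absurd rfl hne
    · match x, hne with
      | some v, _ => exact ⟨v, Subtype.ext (Sym2.eq_swap)⟩
      | none, hne => exact absurd rfl hne
  refine ⟨Option V, H, ⟨⟨Equiv.ofBijective F ⟨hFinj, hFsurj⟩, ?_⟩⟩⟩
  intro v w
  show (H.lineGraph).Adj (F v) (F w) ↔ Γ.Adj v w
  rw [SimpleGraph.lineGraph_adj_iff_exists, hc]
  constructor
  · rintro ⟨hne, -⟩
    intro hvw
    exact hne (by rw [hvw])
  · intro hne
    refine ⟨fun hc2 => hne (hFinj (Subtype.ext (congrArg Subtype.val hc2))), none, ?_, ?_⟩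
    · exact Sym2.mem_mk_left _ _
    · exact Sym2.mem_mk_left _ _

variable {G : Type} [Group G] [Fintype G]

lemma easy_elemAbelian (hnc : ¬ IsCyclic G) (he : IsElemAbelianTwo G) :
    IsLineGraph (properEnhancedPowerGraph G)ᶜ := by
  have hsq := sq_of_elemAbelian he
  apply isLineGraph_of_complete
  rintro ⟨v, hv⟩ ⟨w, hw⟩
  constructor
  · rintro ⟨h1, -⟩
    exact h1
  · intro hne
    refine ⟨hne, ?_⟩
    intro hadj
    have hadj' : (enhancedPowerGraph G).Adj v w := hadj
    obtain ⟨hvw, zz, hvz, hwz⟩ := hadj'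
    have hv1 : v ≠ 1 := by
      intro h0
      exact hv (h0 ▸ one_isDominating)
    have hw1 : w ≠ 1 := by
      intro h0
      exact hw (h0 ▸ one_isDominating)
    rcases zpowers_sq_one (hsq zz) v hvz with h0 | h0
    · exact hv1 h0
    · rcases zpowers_sq_one (hsq zz) w hwz with h1 | h1
      · exact hw1 h1
      · exact hvw (h0.trans h1.symm)

end EasyElem
section Transfer
set_option linter.unusedSectionVars false
open SimpleGraph

variable {G H : Type} [Group G] [Group H]

lemma mulEquiv_zpowers (e : G ≃* H) {a b : G} (h : a ∈ zpowers b) : e a ∈ zpowers (e b) := by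
  obtain ⟨n, rfl⟩ := h
  exact ⟨n, (map_zpow e b n).symm⟩

lemma mulEquiv_adj (e : G ≃* H) {x y : G} :
    (enhancedPowerGraph G).Adj x y ↔ (enhancedPowerGraph H).Adj (e x) (e y) := by
  constructor
  · rintro ⟨hne, w, hx, hy⟩
    exact ⟨fun hc => hne (e.injective hc), e w, mulEquiv_zpowers e hx, mulEquiv_zpowers e hy⟩
  · rintro ⟨hne, w, hx, hy⟩
    have hx' : x ∈ zpowers (e.symm w) := by
      have := mulEquiv_zpowers e.symm hx
      simpa using this
    have hy' : y ∈ zpowers (e.symm w) := by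
      have := mulEquiv_zpowers e.symm hy
      simpa using this
    exact ⟨fun hc => hne (congrArg e hc), e.symm w, hx', hy'⟩

lemma mulEquiv_dom (e : G ≃* H) {v : G} :
    IsDominatingVertex (enhancedPowerGraph G) v ↔
      IsDominatingVertex (enhancedPowerGraph H) (e v) := by
  constructor
  · intro hd w hw
    have h1 : e.symm w ≠ v := fun hc => hw (by rw [← hc]; simp)
    have := hd (e.symm w) h1
    have h2 := (mulEquiv_adj e).mp this
    simpa using h2
  · intro hd w hw
    have h1 : e w ≠ e v := fun hc => hw (e.injective hc)
    have := hd (e w) h1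
    exact (mulEquiv_adj e).mpr this

/-- transfer `IsLineGraph` of the complement of the proper enhanced power graph
along a group isomorphism. -/
lemma isLineGraph_transfer (e : G ≃* H)
    (hl : IsLineGraph (properEnhancedPowerGraph H)ᶜ) :
    IsLineGraph (properEnhancedPowerGraph G)ᶜ := by
  obtain ⟨W, Hgr, ⟨φ⟩⟩ := hl
  refine ⟨W, Hgr, ⟨?_⟩⟩
  have eq1 : ∀ v : G, ¬ IsDominatingVertex (enhancedPowerGraph G) v →
      ¬ IsDominatingVertex (enhancedPowerGraph H) (e v) :=
    fun v hv hc => hv ((mulEquiv_dom e).mpr hc)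
  have eq2 : ∀ w : H, ¬ IsDominatingVertex (enhancedPowerGraph H) w →
      ¬ IsDominatingVertex (enhancedPowerGraph G) (e.symm w) := by
    intro w hw hc
    have := (mulEquiv_dom e).mp hc
    simp only [MulEquiv.apply_symm_apply] at this
    exact hw this
  let E : {v : G | ¬ IsDominatingVertex (enhancedPowerGraph G) v} ≃
      {w : H | ¬ IsDominatingVertex (enhancedPowerGraph H) w} :=
    { toFun := fun v => ⟨e v.1, eq1 v.1 v.2⟩
      invFun := fun w => ⟨e.symm w.1, eq2 w.1 w.2⟩
      left_inv := fun v => Subtype.ext (by simp)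
      right_inv := fun w => Subtype.ext (by simp) }
  refine ⟨E.trans φ.toEquiv, ?_⟩
  intro u v
  show (Hgr.lineGraph).Adj (φ (E u)) (φ (E v)) ↔ _
  rw [φ.map_adj_iff]
  show ((properEnhancedPowerGraph H)ᶜ).Adj ⟨e u.1, _⟩ ⟨e v.1, _⟩ ↔
    ((properEnhancedPowerGraph G)ᶜ).Adj u v
  rw [SimpleGraph.compl_adj, SimpleGraph.compl_adj]
  constructor
  · rintro ⟨h1, h2⟩
    refine ⟨fun hc => h1 (by rw [hc]), fun hadj => h2 ?_⟩
    exact (mulEquiv_adj e).mp hadj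
  · rintro ⟨h1, h2⟩
    refine ⟨fun hc => h1 (Subtype.ext (e.injective (congrArg Subtype.val hc))), fun hadj => h2 ?_⟩
    exact (mulEquiv_adj e).mpr hadj

end Transfer
section Q8Concrete
open SimpleGraph

abbrev Q8 := QuaternionGroup 2

lemma q8_card : Fintype.card Q8 = 8 := rfl

instance q8zpDec (z x : Q8) : Decidable (x ∈ zpowers z) :=
  decidable_of_iff (∃ n : Fin 8, z ^ (n : ℕ) = x) (by
    constructor
    · rintro ⟨n, rfl⟩
      exact ⟨(n : ℕ), (zpow_natCast z (n : ℕ)).trans rfl⟩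
    · intro hx
      obtain ⟨n, rfl⟩ := mem_powers_iff_mem_zpowers.mpr hx
      refine ⟨⟨n % 8, Nat.mod_lt _ (by norm_num)⟩, ?_⟩
      show z ^ (n % 8) = z ^ n
      have := pow_mod_card z n
      rwa [q8_card] at this)

instance q8AdjDec : DecidableRel (enhancedPowerGraph Q8).Adj := fun x y =>
  decidable_of_iff (x ≠ y ∧ ∃ z : Q8, x ∈ zpowers z ∧ y ∈ zpowers z) Iff.rfl

instance q8DomDec : DecidablePred (IsDominatingVertex (enhancedPowerGraph Q8)) := fun v =>
  decidable_of_iff (∀ w : Q8, w ≠ v → (enhancedPowerGraph Q8).Adj v w) Iff.rfl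

lemma q8_dom_test : ¬ IsDominatingVertex (enhancedPowerGraph Q8) (QuaternionGroup.a 1) := by
  decide

end Q8Concrete

section Q8Graph
open QuaternionGroup

def fq : Q8 → Sym2 (Fin 4)
  | .a i => if i = 1 then s(0, 1) else s(2, 3)
  | .xa i => if i = 0 then s(0, 2) else if i = 2 then s(1, 3) else if i = 1 then s(0, 3) else s(1, 2)

lemma fq_mem : ∀ v : Q8, ¬ IsDominatingVertex (enhancedPowerGraph Q8) v → ¬ (fq v).IsDiag := by
  decide

lemma fq_inj : ∀ v w : Q8, ¬ IsDominatingVertex (enhancedPowerGraph Q8) v →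
    ¬ IsDominatingVertex (enhancedPowerGraph Q8) w → fq v = fq w → v = w := by
  decide

lemma fq_surj : ∀ p q : Fin 4, p ≠ q → ∃ v : Q8,
    ¬ IsDominatingVertex (enhancedPowerGraph Q8) v ∧ fq v = s(p, q) := by
  decide

lemma fq_adj : ∀ v w : Q8, ¬ IsDominatingVertex (enhancedPowerGraph Q8) v →
    ¬ IsDominatingVertex (enhancedPowerGraph Q8) w →
    ((fq v ≠ fq w ∧ ∃ u : Fin 4, u ∈ fq v ∧ u ∈ fq w) ↔
      (v ≠ w ∧ ¬ (enhancedPowerGraph Q8).Adj v w)) := by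
  decide

lemma q8_isLineGraph : IsLineGraph (properEnhancedPowerGraph Q8)ᶜ := by
  classical
  let K4 : SimpleGraph (Fin 4) := ⊤
  have hedge : ∀ e : Sym2 (Fin 4), e ∈ K4.edgeSet ↔ ¬ e.IsDiag := by
    intro e
    obtain ⟨⟨p, q⟩, rfl⟩ := e.exists_rep
    rw [SimpleGraph.mem_edgeSet]
    constructor
    · intro h hd
      exact h.ne (Sym2.isDiag_iff_proj_eq |>.mp hd)
    · intro h
      have : p ≠ q := fun hc => h (by rw [hc]; exact Sym2.isDiag_iff_proj_eq |>.mpr rfl)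
      exact this
  let F : {v : Q8 | ¬ IsDominatingVertex (enhancedPowerGraph Q8) v} → K4.edgeSet :=
    fun u => ⟨fq u.1, (hedge _).mpr (fq_mem u.1 u.2)⟩
  have hFinj : Function.Injective F := by
    intro u v huv
    exact Subtype.ext (fq_inj u.1 v.1 u.2 v.2 (congrArg Subtype.val huv))
  have hFsurj : Function.Surjective F := by
    rintro ⟨e, he⟩
    obtain ⟨⟨p, q⟩, rfl⟩ := e.exists_rep
    have hpq : p ≠ q := by
      intro hc
      exact (hedge _).mp he (by rw [hc]; exact Sym2.isDiag_iff_proj_eq |>.mpr rfl)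
    obtain ⟨v, hv, hfv⟩ := fq_surj p q hpq
    exact ⟨⟨v, hv⟩, Subtype.ext hfv⟩
  refine ⟨Fin 4, K4, ⟨⟨Equiv.ofBijective F ⟨hFinj, hFsurj⟩, ?_⟩⟩⟩
  intro u v
  show (K4.lineGraph).Adj (F u) (F v) ↔ ((properEnhancedPowerGraph Q8)ᶜ).Adj u v
  rw [SimpleGraph.lineGraph_adj_iff_exists, SimpleGraph.compl_adj]
  have key := fq_adj u.1 v.1 u.2 v.2
  constructor
  · rintro ⟨h1, h2⟩
    have h1' : fq u.1 ≠ fq v.1 := fun hc => h1 (Subtype.ext hc)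
    obtain ⟨hne, hnadj⟩ := key.mp ⟨h1', h2⟩
    exact ⟨fun hc => hne (congrArg Subtype.val hc), hnadj⟩
  · rintro ⟨h1, h2⟩
    have h1' : u.1 ≠ v.1 := fun hc => h1 (Subtype.ext hc)
    obtain ⟨hne, hex⟩ := key.mpr ⟨h1', h2⟩
    exact ⟨fun hc => hne (congrArg Subtype.val hc), hex⟩

end Q8Graph
/-- for a finite non-cyclic group, `P_E**(G)` is the complement of a line graph
iff `G` is an elementary abelian 2-group or `Q₈`. -/
theorem properEnhancedPowerGraph_compl_isLineGraph_iff (G : Type) [Group G] [Fintype G]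
    (hnc : ¬ IsCyclic G) :
    IsLineGraph (properEnhancedPowerGraph G)ᶜ ↔
      (IsElemAbelianTwo G ∨ Nonempty (G ≃* QuaternionGroup 2)) := by
  constructor
  · exact fun h => hard_direction hnc h
  · intro hor
    rcases hor with he | he
    · exact easy_elemAbelian hnc he
    · exact isLineGraph_transfer he.some q8_isLineGraph
end

section
/- Let G be a finite non-cyclic group such that the intersection of any two distinct maximal cyclic subgroups of G equals T(G), the intersection of all maximal cyclic subgroups of G. Then the proper enhanced power graph P_E**(G) is a line graph of some graph. -/
open Subgroup

lemma isLineGraph_of_classes {V I : Type} (Γ : SimpleGraph V) (f : V → I)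
    (hf : ∀ x y, Γ.Adj x y ↔ x ≠ y ∧ f x = f y) : IsLineGraph Γ := by
  classical
  let H : SimpleGraph (V ⊕ I) :=
    { Adj := fun a b => ∃ v, (a = .inl v ∧ b = .inr (f v)) ∨ (b = .inl v ∧ a = .inr (f v))
      symm := ⟨by
        rintro a b ⟨v, hv | hv⟩
        exacts [⟨v, Or.inr hv⟩, ⟨v, Or.inl hv⟩]⟩
      loopless := ⟨by
        rintro a ⟨v, ⟨h1, h2⟩ | ⟨h1, h2⟩⟩ <;> rw [h1] at h2 <;> exact Sum.inl_ne_inr h2⟩ }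
  have hmem : ∀ v : V, s(Sum.inl v, Sum.inr (f v)) ∈ H.edgeSet := by
    intro v; exact ⟨v, Or.inl ⟨rfl, rfl⟩⟩
  have hbij : Function.Bijective
      (fun v : V => (⟨s(Sum.inl v, Sum.inr (f v)), hmem v⟩ : H.edgeSet)) := by
    constructor
    · intro v w hvw
      have := congrArg Subtype.val hvw
      simp only [Sym2.eq, Sym2.rel_iff', Prod.mk.injEq] at this
      rcases this with ⟨h1, _⟩ | h1
      · exact Sum.inl.inj h1
      · exact absurd (congrArg Prod.fst h1) (by simp)
    · rintro ⟨e, he⟩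
      induction e using Sym2.inductionOn with
      | hf a b =>
        rw [SimpleGraph.mem_edgeSet] at he
        rcases he with ⟨v, ⟨h1, h2⟩ | ⟨h1, h2⟩⟩
        · exact ⟨v, by simp [h1, h2]⟩
        · exact ⟨v, by simp [h1, h2, Sym2.eq_swap]⟩
  refine ⟨V ⊕ I, H, ⟨⟨Equiv.ofBijective _ hbij, ?_⟩⟩⟩
  intro v w
  rw [hf]
  rw [SimpleGraph.lineGraph_adj_iff_exists]
  simp only [Equiv.ofBijective_apply]
  constructor
  · rintro ⟨hne, u, hu1, hu2⟩
    have hne' : v ≠ w := fun hc => hne (by rw [hc])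
    refine ⟨hne', ?_⟩
    rw [Sym2.mem_iff] at hu1 hu2
    rcases hu1 with h1 | h1 <;> rcases hu2 with h2 | h2 <;>
      [skip; skip; skip; exact Sum.inr.inj (h1.symm.trans h2)] <;>
      first
      | (exact absurd (Sum.inl.inj (h1.symm.trans h2)) hne')
      | (exact absurd (h1.symm.trans h2) (by simp))
  · rintro ⟨hne, hsame⟩
    refine ⟨fun hc => hne (hbij.1 hc), ⟨Sum.inr (f v), ?_⟩⟩
    constructor
    · exact Sym2.mem_iff.mpr (Or.inr rfl)
    · exact Sym2.mem_iff.mpr (Or.inr (by rw [hsame]))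

lemma isCyclic_zpowers {G : Type} [Group G] (x : G) : IsCyclic (zpowers x) := by
  constructor
  refine ⟨⟨x, mem_zpowers x⟩, ?_⟩
  rintro ⟨y, hy⟩
  obtain ⟨n, hn⟩ := mem_zpowers_iff.mp hy
  exact mem_zpowers_iff.mpr ⟨n, Subtype.ext (by simpa using hn)⟩

lemma cyclic_eq_zpowers {G : Type} [Group G] {M : Subgroup G} (hM : IsCyclic M) :
    ∃ z : G, M = zpowers z := by
  obtain ⟨⟨g, hg⟩, hgen⟩ := hM.exists_generator
  refine ⟨g, le_antisymm ?_ ((zpowers_le).mpr hg)⟩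
  intro x hx
  obtain ⟨n, hn⟩ := hgen ⟨x, hx⟩
  exact mem_zpowers_iff.mpr ⟨n, by simpa using congrArg Subtype.val hn⟩

lemma exists_maxCyclic {G : Type} [Group G] [Fintype G] (x : G) :
    ∃ M : Subgroup G, IsMaxCyclic M ∧ x ∈ M := by
  classical
  have hfin : ({N : Subgroup G | IsCyclic N ∧ x ∈ N}).Finite := Set.toFinite _
  have hne : ({N : Subgroup G | IsCyclic N ∧ x ∈ N}).Nonempty :=
    ⟨zpowers x, _root_.isCyclic_zpowers x, mem_zpowers x⟩
  obtain ⟨M, hM, hmax⟩ := Set.Finite.exists_maximal hfin hne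
  exact ⟨M, ⟨hM.1, fun N hN hMN => le_antisymm (hmax ⟨hN, hMN hM.2⟩ hMN) hMN⟩, hM.2⟩

/-- if in a finite non-cyclic group the intersection of any two distinct
maximal cyclic subgroups equals `T(G)`, then `P_E**(G)` is a line graph. -/
theorem properEnhancedPowerGraph_isLineGraph_of_inter_eq_core (G : Type) [Group G] [Fintype G]
    (hnc : ¬ IsCyclic G)
    (h : ∀ M N : Subgroup G, IsMaxCyclic M → IsMaxCyclic N → M ≠ N →
      M ⊓ N = cyclicCore G) :
    IsLineGraph (properEnhancedPowerGraph G) := by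
  classical
  have key : ∀ x : G, ¬ IsDominatingVertex (enhancedPowerGraph G) x →
      ∀ M N : Subgroup G, IsMaxCyclic M → IsMaxCyclic N → x ∈ M → x ∈ N → M = N := by
    intro x hx M N hM hN hxM hxN
    by_contra hne
    apply hx
    intro y hy
    have hxcore : x ∈ cyclicCore G := by
      rw [← h M N hM hN hne]; exact ⟨hxM, hxN⟩
    obtain ⟨M', hM', hyM'⟩ := exists_maxCyclic y
    obtain ⟨z, hz⟩ := cyclic_eq_zpowers hM'.1
    have hxM' : x ∈ M' := (iInf₂_le M' hM' : cyclicCore G ≤ M') hxcore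
    exact ⟨Ne.symm hy, z, hz ▸ hxM', hz ▸ hyM'⟩
  set S := {v : G | ¬ IsDominatingVertex (enhancedPowerGraph G) v}
  let f : S → Subgroup G := fun v => (exists_maxCyclic (v : G)).choose
  have hfspec : ∀ v : S, IsMaxCyclic (f v) ∧ (v : G) ∈ f v :=
    fun v => (exists_maxCyclic (v : G)).choose_spec
  have huniq : ∀ (v : S) (M : Subgroup G), IsMaxCyclic M → (v : G) ∈ M → f v = M :=
    fun v M hM hvM => key v v.2 (f v) M (hfspec v).1 hM (hfspec v).2 hvM
  apply isLineGraph_of_classes _ f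
  intro x y
  constructor
  · rintro ⟨hne, z, hxz, hyz⟩
    obtain ⟨M, hM, hzM⟩ := exists_maxCyclic z
    have hle : zpowers z ≤ M := zpowers_le.mpr hzM
    refine ⟨fun hc => hne (by rw [hc]), ?_⟩
    rw [huniq x M hM (hle hxz), huniq y M hM (hle hyz)]
  · rintro ⟨hne, hsame⟩
    obtain ⟨z, hz⟩ := cyclic_eq_zpowers (hfspec x).1.1
    refine ⟨Subtype.coe_ne_coe.mpr hne, z, hz ▸ (hfspec x).2, hz ▸ ?_⟩
    exact hsame ▸ (hfspec y).2
end
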